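/- Let φ be decreasing and regularly varying of index −1, V a positive bounded operator, and G a Hilbert–Schmidt operator which is spectrally φ-modulated with respect to V, i.e. sup_{t>0} φ(t)^{−1/2} ‖G E_V[0,t^{−1}]‖_{HS} < ∞. Then G is strongly φ-modulated with respect to V: sup_{t>0} φ(t)^{−1/2} ‖G(1+tV)^{−1}‖_{HS} < ∞. -/

import Mathlib

open Filter
open scoped InnerProductSpace

/-- The `n`-th singular value (approximation number) of a bounded operator `T`. -/
noncomputable def approxNum {H : Type*} [NormedAddCommGroup H] [InnerProductSpace ℂ H]
    (T : H →L[ℂ] H) (n : ℕ) : ℝ :=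
  sInf ((fun A : H →L[ℂ] H => ‖T - A‖) ''
    {A | FiniteDimensional ℂ (LinearMap.range (A : H →ₗ[ℂ] H)) ∧
      Module.finrank ℂ (LinearMap.range (A : H →ₗ[ℂ] H)) ≤ n})

/-- The Hilbert–Schmidt norm of `T`, realized as the `ℓ²`-norm of the singular
values. -/
noncomputable def hsNorm {H : Type*} [NormedAddCommGroup H] [InnerProductSpace ℂ H]
    (T : H →L[ℂ] H) : ℝ :=
  Real.sqrt (∑' k, approxNum T k ^ 2)

section Approx
variable {H : Type*} [NormedAddCommGroup H] [InnerProductSpace ℂ H]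

lemma approxSet_nonempty (T : H →L[ℂ] H) (n : ℕ) :
    ((fun A : H →L[ℂ] H => ‖T - A‖) ''
    {A | FiniteDimensional ℂ (LinearMap.range (A : H →ₗ[ℂ] H)) ∧
      Module.finrank ℂ (LinearMap.range (A : H →ₗ[ℂ] H)) ≤ n}).Nonempty := by
  refine ⟨‖T - 0‖, ⟨0, ⟨?_, ?_⟩, rfl⟩⟩ <;>
    rw [ContinuousLinearMap.coe_zero, LinearMap.range_zero]
  · infer_instance
  · simp [finrank_bot]

lemma approxSet_bddBelow (T : H →L[ℂ] H) (n : ℕ) :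
    BddBelow ((fun A : H →L[ℂ] H => ‖T - A‖) ''
    {A | FiniteDimensional ℂ (LinearMap.range (A : H →ₗ[ℂ] H)) ∧
      Module.finrank ℂ (LinearMap.range (A : H →ₗ[ℂ] H)) ≤ n}) :=
  ⟨0, by rintro x ⟨A, -, rfl⟩; positivity⟩

lemma approxNum_nonneg (T : H →L[ℂ] H) (n : ℕ) : 0 ≤ approxNum T n :=
  le_csInf (approxSet_nonempty T n) (by rintro x ⟨A, -, rfl⟩; positivity)

lemma approxNum_le (T : H →L[ℂ] H) {A : H →L[ℂ] H} {n : ℕ}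
    (h1 : FiniteDimensional ℂ (LinearMap.range (A : H →ₗ[ℂ] H)))
    (h2 : Module.finrank ℂ (LinearMap.range (A : H →ₗ[ℂ] H)) ≤ n) :
    approxNum T n ≤ ‖T - A‖ :=
  csInf_le (approxSet_bddBelow T n) ⟨A, ⟨h1, h2⟩, rfl⟩

lemma approxNum_le_norm (T : H →L[ℂ] H) (n : ℕ) : approxNum T n ≤ ‖T‖ := by
  simpa using approxNum_le T (A := 0) (n := n)
    (by rw [ContinuousLinearMap.coe_zero, LinearMap.range_zero]; infer_instance)
    (by rw [ContinuousLinearMap.coe_zero, LinearMap.range_zero, finrank_bot]; omega)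

lemma approxNum_exists (T : H →L[ℂ] H) (n : ℕ) {ε : ℝ} (hε : 0 < ε) :
    ∃ A : H →L[ℂ] H, FiniteDimensional ℂ (LinearMap.range (A : H →ₗ[ℂ] H)) ∧
      Module.finrank ℂ (LinearMap.range (A : H →ₗ[ℂ] H)) ≤ n ∧
      ‖T - A‖ < approxNum T n + ε := by
  obtain ⟨x, ⟨A, hA, rfl⟩, hx⟩ := exists_lt_of_csInf_lt (approxSet_nonempty T n)
    (lt_add_of_pos_right (approxNum T n) hε)
  exact ⟨A, hA.1, hA.2, hx⟩

lemma approxNum_antitone (T : H →L[ℂ] H) {n m : ℕ} (h : n ≤ m) :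
    approxNum T m ≤ approxNum T n := by
  apply csInf_le_csInf (approxSet_bddBelow T m) (approxSet_nonempty T n)
  rintro x ⟨A, ⟨h1, h2⟩, rfl⟩
  exact ⟨A, ⟨h1, h2.trans h⟩, rfl⟩

lemma approxNum_comp_le (T S : H →L[ℂ] H) (n : ℕ) :
    approxNum (T.comp S) n ≤ approxNum T n * ‖S‖ := by
  refine le_of_forall_pos_le_add (fun ε hε => ?_)
  obtain ⟨A, h1, h2, hA⟩ := approxNum_exists T n (ε := ε / (‖S‖ + 1))
    (by positivity)
  have hrange : LinearMap.range ((A.comp S : H →L[ℂ] H) : H →ₗ[ℂ] H) ≤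
      LinearMap.range (A : H →ₗ[ℂ] H) := by
    rw [ContinuousLinearMap.toLinearMap_comp]
    exact LinearMap.range_comp_le_range _ _
  have h1' : FiniteDimensional ℂ (LinearMap.range ((A.comp S : H →L[ℂ] H) : H →ₗ[ℂ] H)) :=
    Submodule.finiteDimensional_of_le hrange
  have h2' : Module.finrank ℂ (LinearMap.range ((A.comp S : H →L[ℂ] H) : H →ₗ[ℂ] H)) ≤ n :=
    (Submodule.finrank_mono hrange).trans h2
  calc approxNum (T.comp S) n ≤ ‖T.comp S - A.comp S‖ := approxNum_le _ h1' h2'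
    _ = ‖(T - A).comp S‖ := by rw [ContinuousLinearMap.sub_comp]
    _ ≤ ‖T - A‖ * ‖S‖ := ContinuousLinearMap.opNorm_comp_le _ _
    _ ≤ (approxNum T n + ε / (‖S‖ + 1)) * ‖S‖ := by
        apply mul_le_mul_of_nonneg_right hA.le (norm_nonneg _)
    _ ≤ approxNum T n * ‖S‖ + ε := by
        rw [add_mul]
        have : ε / (‖S‖ + 1) * ‖S‖ ≤ ε := by
          rw [div_mul_eq_mul_div, div_le_iff₀ (by positivity)]
          nlinarith [norm_nonneg S, hε.le]
        linarith

lemma approxNum_add_le (T T' : H →L[ℂ] H) (n m : ℕ) :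
    approxNum (T + T') (n + m) ≤ approxNum T n + approxNum T' m := by
  refine le_of_forall_pos_le_add (fun ε hε => ?_)
  obtain ⟨A, h1, h2, hA⟩ := approxNum_exists T n (half_pos hε)
  obtain ⟨A', h1', h2', hA'⟩ := approxNum_exists T' m (half_pos hε)
  have hrange : LinearMap.range (((A + A') : H →L[ℂ] H) : H →ₗ[ℂ] H) ≤
      LinearMap.range (A : H →ₗ[ℂ] H) ⊔ LinearMap.range (A' : H →ₗ[ℂ] H) := by
    rintro x ⟨y, rfl⟩
    exact Submodule.add_mem_sup ⟨y, rfl⟩ ⟨y, rfl⟩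
  have hfd : FiniteDimensional ℂ
      (↥(LinearMap.range (A : H →ₗ[ℂ] H) ⊔ LinearMap.range (A' : H →ₗ[ℂ] H))) :=
    Submodule.finiteDimensional_sup _ _
  have hg1 : FiniteDimensional ℂ (LinearMap.range (((A + A') : H →L[ℂ] H) : H →ₗ[ℂ] H)) :=
    Submodule.finiteDimensional_of_le hrange
  have hg2 : Module.finrank ℂ (LinearMap.range (((A + A') : H →L[ℂ] H) : H →ₗ[ℂ] H)) ≤ n + m :=
    (Submodule.finrank_mono hrange).trans
      ((Submodule.finrank_add_le_finrank_add_finrank _ _).trans (add_le_add h2 h2'))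
  calc approxNum (T + T') (n + m) ≤ ‖(T + T') - (A + A')‖ := approxNum_le _ hg1 hg2
    _ ≤ ‖T - A‖ + ‖T' - A'‖ := by
        rw [show (T + T') - (A + A') = (T - A) + (T' - A') by abel]
        exact norm_add_le _ _
    _ ≤ approxNum T n + approxNum T' m + ε := by linarith

end Approx
section HS
variable {H : Type*} [NormedAddCommGroup H] [InnerProductSpace ℂ H]

lemma summable_approx_comp {T : H →L[ℂ] H} (hT : Summable fun k => approxNum T k ^ 2)
    (S : H →L[ℂ] H) : Summable fun k => approxNum (T.comp S) k ^ 2 := by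
  refine Summable.of_nonneg_of_le (fun k => by positivity) (fun k => ?_) (hT.mul_right (‖S‖ ^ 2))
  have h1 := approxNum_comp_le T S k
  have h2 := approxNum_nonneg (T.comp S) k
  have h3 := approxNum_nonneg T k
  nlinarith

lemma hsNorm_nonneg (T : H →L[ℂ] H) : 0 ≤ hsNorm T := Real.sqrt_nonneg _

lemma hsNorm_comp_le {T : H →L[ℂ] H} (hT : Summable fun k => approxNum T k ^ 2)
    (S : H →L[ℂ] H) : hsNorm (T.comp S) ≤ hsNorm T * ‖S‖ := by
  have h1 : ∑' k, approxNum (T.comp S) k ^ 2 ≤ ∑' k, approxNum T k ^ 2 * ‖S‖ ^ 2 := by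
    refine Summable.tsum_le_tsum (fun k => ?_) (summable_approx_comp hT S) (hT.mul_right _)
    have h1 := approxNum_comp_le T S k
    have h2 := approxNum_nonneg (T.comp S) k
    have h3 := approxNum_nonneg T k
    nlinarith
  calc hsNorm (T.comp S) ≤ Real.sqrt (∑' k, approxNum T k ^ 2 * ‖S‖ ^ 2) :=
        Real.sqrt_le_sqrt h1
    _ = hsNorm T * ‖S‖ := by
        rw [tsum_mul_right, Real.sqrt_mul (tsum_nonneg (fun k => by positivity)),
          Real.sqrt_sq (norm_nonneg S)]
        rfl

lemma hsNorm_add_le {A B : H →L[ℂ] H} (hA : Summable fun k => approxNum A k ^ 2)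
    (hB : Summable fun k => approxNum B k ^ 2) :
    hsNorm (A + B) ≤ 2 * (hsNorm A + hsNorm B) := by
  set u := fun k => approxNum A k with hu
  set v := fun k => approxNum B k with hv
  set z := fun k => approxNum (A + B) k with hz
  have hz2 : ∀ k, z (2 * k) ≤ u k + v k := fun k => by
    simpa [two_mul] using approxNum_add_le A B k k
  have huv : Summable fun k => (u k + v k) ^ 2 := by
    refine Summable.of_nonneg_of_le (fun k => by positivity) (fun k => ?_)
      ((hA.mul_left 2).add (hB.mul_left 2))
    show (u k + v k) ^ 2 ≤ 2 * approxNum A k ^ 2 + 2 * approxNum B k ^ 2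
    have e1 : approxNum A k = u k := rfl
    have e2 : approxNum B k = v k := rfl
    rw [e1, e2]
    nlinarith [sq_nonneg (u k - v k)]
  have hpart : ∀ n, ∑ i ∈ Finset.range (2 * n), z i ^ 2 ≤
      ∑ k ∈ Finset.range n, 2 * (u k + v k) ^ 2 := by
    intro n
    induction n with
    | zero => simp
    | succ n ih =>
        have e : 2 * (n + 1) = (2 * n) + 1 + 1 := by ring
        rw [e, Finset.sum_range_succ, Finset.sum_range_succ, Finset.sum_range_succ]
        have ha : z (2 * n) ≤ u n + v n := hz2 n
        have hb : z (2 * n + 1) ≤ u n + v n :=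
          (approxNum_antitone (A + B) (by omega)).trans ha
        have h0 : 0 ≤ z (2 * n + 1) := approxNum_nonneg _ _
        have h0' : 0 ≤ z (2 * n) := approxNum_nonneg _ _
        nlinarith
  have hbound : ∀ n, ∑ i ∈ Finset.range n, z i ^ 2 ≤ 2 * ∑' k, (u k + v k) ^ 2 := by
    intro n
    calc ∑ i ∈ Finset.range n, z i ^ 2 ≤ ∑ i ∈ Finset.range (2 * n), z i ^ 2 :=
          Finset.sum_le_sum_of_subset_of_nonneg
            (Finset.range_subset_range.2 (by omega)) (fun i _ _ => by positivity)
      _ ≤ ∑ k ∈ Finset.range n, 2 * (u k + v k) ^ 2 := hpart n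
      _ ≤ ∑' k, 2 * (u k + v k) ^ 2 :=
          Summable.sum_le_tsum _ (fun k _ => by positivity) (huv.mul_left 2)
      _ = 2 * ∑' k, (u k + v k) ^ 2 := tsum_mul_left
  have hzsum : Summable fun n => z n ^ 2 :=
    summable_of_sum_range_le (fun n => by positivity) hbound
  have htsum : ∑' n, z n ^ 2 ≤ 2 * ∑' k, (u k + v k) ^ 2 :=
    Summable.tsum_le_of_sum_range_le hzsum hbound
  have huv2 : ∑' k, (u k + v k) ^ 2 ≤ 2 * (∑' k, u k ^ 2) + 2 * (∑' k, v k ^ 2) := by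
    have hpt : ∀ k, (u k + v k) ^ 2 ≤ 2 * u k ^ 2 + 2 * v k ^ 2 := by
      intro k
      nlinarith [sq_nonneg (u k - v k)]
    have := Summable.tsum_le_tsum (f := fun k => (u k + v k) ^ 2)
      (g := fun k => 2 * u k ^ 2 + 2 * v k ^ 2)
      hpt huv ((hA.mul_left 2).add (hB.mul_left 2))
    rwa [Summable.tsum_add (hA.mul_left 2) (hB.mul_left 2), tsum_mul_left, tsum_mul_left] at this
  have ha0 : (0:ℝ) ≤ ∑' k, u k ^ 2 := tsum_nonneg (fun k => by positivity)
  have hb0 : (0:ℝ) ≤ ∑' k, v k ^ 2 := tsum_nonneg (fun k => by positivity)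
  have key : ∑' n, z n ^ 2 ≤ 4 * ((∑' k, u k ^ 2) + (∑' k, v k ^ 2)) := by linarith
  calc hsNorm (A + B) = Real.sqrt (∑' n, z n ^ 2) := rfl
    _ ≤ Real.sqrt (4 * ((∑' k, u k ^ 2) + (∑' k, v k ^ 2))) := Real.sqrt_le_sqrt key
    _ = 2 * Real.sqrt ((∑' k, u k ^ 2) + (∑' k, v k ^ 2)) := by
        rw [show (4:ℝ) * ((∑' k, u k ^ 2) + (∑' k, v k ^ 2)) =
          (2:ℝ)^2 * ((∑' k, u k ^ 2) + (∑' k, v k ^ 2)) by ring,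
          Real.sqrt_mul (by positivity), Real.sqrt_sq (by norm_num)]
    _ ≤ 2 * (hsNorm A + hsNorm B) := by
        have h := Real.sqrt_le_sqrt (show (∑' k, u k ^ 2) + (∑' k, v k ^ 2) ≤
          (Real.sqrt (∑' k, u k ^ 2) + Real.sqrt (∑' k, v k ^ 2)) ^ 2 by
            nlinarith [Real.sq_sqrt ha0, Real.sq_sqrt hb0,
              Real.sqrt_nonneg (∑' k, u k ^ 2), Real.sqrt_nonneg (∑' k, v k ^ 2)])
        rw [Real.sqrt_sq (by positivity)] at h
        have : hsNorm A = Real.sqrt (∑' k, u k ^ 2) := rfl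
        have : hsNorm B = Real.sqrt (∑' k, v k ^ 2) := rfl
        unfold hsNorm
        linarith [h]

end HS
section Op
variable {H : Type*} [NormedAddCommGroup H] [InnerProductSpace ℂ H] [CompleteSpace H]

lemma proj_re_inner {P : H →L[ℂ] H} (hsa : IsSelfAdjoint P) (hproj : P.comp P = P)
    (x : H) : (⟪x, P x⟫_ℂ).re = ‖P x‖ ^ 2 := by
  have hP : ∀ y z : H, ⟪P y, z⟫_ℂ = ⟪y, P z⟫_ℂ := by
    intro y z
    nth_rewrite 1 [← hsa.adjoint_eq]
    exact ContinuousLinearMap.adjoint_inner_left P z y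
  have h1 : P (P x) = P x := by
    have := ContinuousLinearMap.ext_iff.mp hproj x
    simpa using this
  have : ⟪x, P x⟫_ℂ = ⟪P x, P x⟫_ℂ := by
    conv_lhs => rw [← h1, ← hP]
  rw [this]
  have := @inner_self_eq_norm_sq ℂ _ _ _ _ (P x)
  simpa using this

lemma proj_norm_le {P : H →L[ℂ] H} (hsa : IsSelfAdjoint P) (hproj : P.comp P = P)
    (x : H) : ‖P x‖ ≤ ‖x‖ ∧ ‖x - P x‖ ≤ ‖x‖ := by
  have h1 : (⟪x, P x⟫_ℂ).re = ‖P x‖ ^ 2 := proj_re_inner hsa hproj x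
  have h2 : ‖P x‖ ^ 2 ≤ ‖x‖ * ‖P x‖ := by
    rw [← h1]
    calc (⟪x, P x⟫_ℂ).re ≤ ‖⟪x, P x⟫_ℂ‖ := by
          simpa using RCLike.re_le_norm (⟪x, P x⟫_ℂ)
      _ ≤ ‖x‖ * ‖P x‖ := norm_inner_le_norm x (P x)
  constructor
  · rcases eq_or_lt_of_le (norm_nonneg (P x)) with h | h
    · rw [← h]; exact norm_nonneg x
    · nlinarith
  · have h3 : ‖x - P x‖ ^ 2 = ‖x‖ ^ 2 - ‖P x‖ ^ 2 := by
      have := @norm_sub_sq ℂ _ _ _ _ x (P x)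
      simp only [RCLike.re_to_complex] at this
      rw [this, h1]; ring
    have h4 : ‖x - P x‖ ^ 2 ≤ ‖x‖ ^ 2 := by nlinarith [sq_nonneg ‖P x‖]
    calc ‖x - P x‖ = Real.sqrt (‖x - P x‖ ^ 2) := (Real.sqrt_sq (norm_nonneg _)).symm
      _ ≤ Real.sqrt (‖x‖ ^ 2) := Real.sqrt_le_sqrt h4
      _ = ‖x‖ := Real.sqrt_sq (norm_nonneg _)

omit [CompleteSpace H] in
lemma re_inner_add_smul (V : H →L[ℂ] H) (t : ℝ) (w z : H) :
    (⟪w + (t : ℂ) • V w, z⟫_ℂ).re = (⟪w, z⟫_ℂ).re + t * (⟪V w, z⟫_ℂ).re := by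
  rw [inner_add_left, inner_smul_left]
  simp [Complex.re_ofReal_mul]

end Op
section Res
variable {H : Type*} [NormedAddCommGroup H] [InnerProductSpace ℂ H] [CompleteSpace H]

lemma R_norm_le_one {V : H →L[ℂ] H} (hV : V.IsPositive) {Rt : H →L[ℂ] H} {t : ℝ}
    (ht : 0 ≤ t) (h1 : ((1 : H →L[ℂ] H) + (t : ℂ) • V).comp Rt = 1) : ‖Rt‖ ≤ 1 := by
  apply ContinuousLinearMap.opNorm_le_bound _ zero_le_one
  intro x
  rw [one_mul]
  have hy : Rt x + (t : ℂ) • V (Rt x) = x := by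
    have := ContinuousLinearMap.ext_iff.mp h1 x
    simpa [ContinuousLinearMap.comp_apply, ContinuousLinearMap.add_apply,
      ContinuousLinearMap.smul_apply] using this
  set y := Rt x with hydef
  have h2 : ‖y‖ ^ 2 + t * (⟪V y, y⟫_ℂ).re = (⟪x, y⟫_ℂ).re := by
    conv_rhs => rw [← hy]
    rw [re_inner_add_smul]
    congr 1
    have := @inner_self_eq_norm_sq ℂ _ _ _ _ y
    simpa using this.symm
  have h3 : 0 ≤ (⟪V y, y⟫_ℂ).re := (Complex.nonneg_iff.mp (hV.inner_nonneg_left y)).1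
  have h4 : (⟪x, y⟫_ℂ).re ≤ ‖x‖ * ‖y‖ := by
    calc (⟪x, y⟫_ℂ).re ≤ ‖⟪x, y⟫_ℂ‖ := by simpa using RCLike.re_le_norm (⟪x, y⟫_ℂ)
      _ ≤ ‖x‖ * ‖y‖ := norm_inner_le_norm x y
  have h5 : ‖y‖ ^ 2 ≤ ‖x‖ * ‖y‖ := by nlinarith
  rcases eq_or_lt_of_le (norm_nonneg y) with h | h
  · rw [← h]; exact norm_nonneg x
  · nlinarith

lemma compl_res_norm {V : H →L[ℂ] H} {P Rt : H →L[ℂ] H} {t s : ℝ} (ht : 0 < t) (hs : 0 ≤ s)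
    (hsa : IsSelfAdjoint P) (hproj : P.comp P = P) (hPV : P.comp V = V.comp P)
    (hc : ∀ x : H, P x = 0 → s * ‖x‖ ^ 2 ≤ (⟪V x, x⟫_ℂ).re)
    (h1 : ((1 : H →L[ℂ] H) + (t : ℂ) • V).comp Rt = 1) :
    ‖((1 : H →L[ℂ] H) - P).comp Rt‖ ≤ 1 / (1 + t * s) := by
  have hts : (0:ℝ) < 1 + t * s := by nlinarith
  apply ContinuousLinearMap.opNorm_le_bound _ (by positivity)
  intro x
  set y := Rt x with hydef
  set w := y - P y with hwdef
  have hwapp : (((1 : H →L[ℂ] H) - P).comp Rt) x = w := by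
    simp [ContinuousLinearMap.comp_apply, ContinuousLinearMap.sub_apply,
      ContinuousLinearMap.one_apply, hwdef, hydef]
  rw [hwapp]
  have hPy : P (P y) = P y := by
    have := ContinuousLinearMap.ext_iff.mp hproj y
    simpa [ContinuousLinearMap.comp_apply] using this
  have hPw : P w = 0 := by
    rw [hwdef, map_sub, hPy, sub_self]
  have hVP : ∀ z : H, P (V z) = V (P z) := by
    intro z
    have := ContinuousLinearMap.ext_iff.mp hPV z
    simpa [ContinuousLinearMap.comp_apply] using this
  have hAy : y + (t : ℂ) • V y = x := by
    have := ContinuousLinearMap.ext_iff.mp h1 x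
    simpa [ContinuousLinearMap.comp_apply, ContinuousLinearMap.add_apply,
      ContinuousLinearMap.smul_apply] using this
  have hAPy : P y + (t : ℂ) • V (P y) = P x := by
    have h := congrArg P hAy
    rw [map_add, map_smul, hVP y] at h
    exact h
  have hAw : w + (t : ℂ) • V w = x - P x := by
    rw [hwdef, map_sub, smul_sub]
    rw [show y - P y + ((t:ℂ) • V y - (t:ℂ) • V (P y)) =
      (y + (t:ℂ) • V y) - (P y + (t:ℂ) • V (P y)) by abel, hAy, hAPy]
  have hlow : s * ‖w‖ ^ 2 ≤ (⟪V w, w⟫_ℂ).re := hc w hPw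
  have hxP : ‖x - P x‖ ≤ ‖x‖ := (proj_norm_le hsa hproj x).2
  have hkey : (1 + t * s) * ‖w‖ ^ 2 ≤ ‖x‖ * ‖w‖ := by
    have e1 : (⟪w + (t : ℂ) • V w, w⟫_ℂ).re = ‖w‖ ^ 2 + t * (⟪V w, w⟫_ℂ).re := by
      rw [re_inner_add_smul]
      congr 1
      have := @inner_self_eq_norm_sq ℂ _ _ _ _ w
      simpa using this
    have e2 : (⟪x - P x, w⟫_ℂ).re ≤ ‖x‖ * ‖w‖ := by
      calc (⟪x - P x, w⟫_ℂ).re ≤ ‖⟪x - P x, w⟫_ℂ‖ := by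
            simpa using RCLike.re_le_norm (⟪x - P x, w⟫_ℂ)
        _ ≤ ‖x - P x‖ * ‖w‖ := norm_inner_le_norm _ _
        _ ≤ ‖x‖ * ‖w‖ := mul_le_mul_of_nonneg_right hxP (norm_nonneg _)
    have e3 : (⟪w + (t : ℂ) • V w, w⟫_ℂ).re = (⟪x - P x, w⟫_ℂ).re := by rw [hAw]
    nlinarith [mul_le_mul_of_nonneg_left hlow ht.le]
  rcases eq_or_lt_of_le (norm_nonneg w) with h | h
  · rw [← h]; positivity
  · rw [div_mul_eq_mul_div, le_div_iff₀ hts]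
    nlinarith

lemma comm_res {V P Rt : H →L[ℂ] H} {t : ℂ}
    (hPV : P.comp V = V.comp P)
    (h1 : ((1 : H →L[ℂ] H) + t • V).comp Rt = 1)
    (h2 : Rt.comp ((1 : H →L[ℂ] H) + t • V) = 1) : P.comp Rt = Rt.comp P := by
  have hPV' : P * V = V * P := hPV
  rw [← ContinuousLinearMap.mul_def] at h1 h2 ⊢
  set A := (1 : H →L[ℂ] H) + t • V with hA
  have hPA : P * A = A * P := by
    rw [hA, mul_add, add_mul, mul_one, one_mul, mul_smul_comm, smul_mul_assoc, hPV']
  calc P * Rt = (Rt * A) * (P * Rt) := by rw [h2, one_mul]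
    _ = Rt * ((A * P) * Rt) := by rw [mul_assoc, mul_assoc]
    _ = Rt * (P * (A * Rt)) := by rw [← hPA, mul_assoc]
    _ = Rt * P := by rw [h1, mul_one]

end Res


set_option maxHeartbeats 1000000

/-- **Lemma (spectrally modulated implies strongly modulated).** Let `φ` be
decreasing and regularly varying of index `-1`, `V` a positive bounded operator
with spectral projections `E s = E_V[0,s]` and resolvents `R t = (1 + tV)⁻¹`.
If `G` is a Hilbert–Schmidt operator with
`sup_{t>0} φ(t)^{-1/2} ‖G E_V[0, t⁻¹]‖_{HS} < ∞`, then
`sup_{t>0} φ(t)^{-1/2} ‖G (1 + tV)⁻¹‖_{HS} < ∞`. -/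
theorem strongly_modulated_of_spectrally_modulated
    {H : Type*} [NormedAddCommGroup H] [InnerProductSpace ℂ H] [CompleteSpace H]
    (φ : ℝ → ℝ) (hφpos : ∀ t, 0 ≤ t → 0 < φ t)
    (hφdec : ∀ s t, 0 ≤ s → s ≤ t → φ t ≤ φ s)
    (hφrv : ∀ l : ℝ, 0 < l →
      Tendsto (fun t => φ (l * t) / φ t) atTop (nhds l⁻¹))
    (V : H →L[ℂ] H) (hV : V.IsPositive)
    (E : ℝ → (H →L[ℂ] H))
    -- `E s` is the spectral projection `E_V[0,s]` of `V`:
    (hEsa : ∀ s : ℝ, 0 ≤ s → IsSelfAdjoint (E s))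
    (hEproj : ∀ s : ℝ, 0 ≤ s → (E s).comp (E s) = E s)
    (hEV : ∀ s : ℝ, 0 ≤ s → (E s).comp V = V.comp (E s))
    (hVE : ∀ s : ℝ, 0 ≤ s → ‖V.comp (E s)‖ ≤ s)
    (hcompl : ∀ s : ℝ, 0 ≤ s → ∀ x : H, E s x = 0 → s * ‖x‖ ^ 2 ≤ (⟪V x, x⟫_ℂ).re)
    -- `R t` is the resolvent `(1 + t V)⁻¹`:
    (R : ℝ → (H →L[ℂ] H))
    (hR : ∀ t > (0:ℝ), (1 + (t : ℂ) • V).comp (R t) = 1 ∧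
      (R t).comp (1 + (t : ℂ) • V) = 1)
    (G : H →L[ℂ] H) (hG : Summable (fun k => approxNum G k ^ 2))
    (hspec : ∃ K₀ : ℝ, ∀ t > (0:ℝ),
      hsNorm (G.comp (E t⁻¹)) ≤ K₀ * Real.sqrt (φ t)) :
    ∃ K : ℝ, ∀ t > (0:ℝ), hsNorm (G.comp (R t)) ≤ K * Real.sqrt (φ t) := by
  obtain ⟨K₀, hK₀⟩ := hspec
  have hφ1 : 0 < Real.sqrt (φ 1) := Real.sqrt_pos.mpr (hφpos 1 one_pos.le)
  have hK₀0 : 0 ≤ K₀ := by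
    have h := hK₀ 1 one_pos
    have h0 : 0 ≤ hsNorm (G.comp (E (1:ℝ)⁻¹)) := hsNorm_nonneg _
    nlinarith
  -- ratio bounds
  have h64 : ∀ᶠ u in atTop, φ (u/64) / φ u ≤ 65 := by
    have h := hφrv (1/64) (by norm_num)
    rw [show ((1:ℝ)/64)⁻¹ = 64 by norm_num] at h
    have h' := h.eventually (eventually_le_nhds (by norm_num : (64:ℝ) < 65))
    refine h'.mono (fun u hu => ?_)
    rwa [show (1/64:ℝ)*u = u/64 by ring] at hu
  have h255 : ∀ᶠ u in atTop, φ (u/255) / φ u ≤ 256 := by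
    have h := hφrv (1/255) (by norm_num)
    rw [show ((1:ℝ)/255)⁻¹ = 255 by norm_num] at h
    have h' := h.eventually (eventually_le_nhds (by norm_num : (255:ℝ) < 256))
    refine h'.mono (fun u hu => ?_)
    rwa [show (1/255:ℝ)*u = u/255 by ring] at hu
  obtain ⟨T₁, hT₁⟩ := eventually_atTop.mp (h64.and h255)
  set T₀ := max 1 T₁ with hT₀def
  have hT₀1 : (1:ℝ) ≤ T₀ := le_max_left _ _
  have hT₀pos : (0:ℝ) < T₀ := lt_of_lt_of_le one_pos hT₀1
  have hφT₀ : 0 < Real.sqrt (φ T₀) := Real.sqrt_pos.mpr (hφpos T₀ hT₀pos.le)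
  set B := hsNorm G / Real.sqrt (φ T₀) with hBdef
  have hB0 : 0 ≤ B := div_nonneg (hsNorm_nonneg G) hφT₀.le
  set K := B + 512 * K₀ with hKdef
  have hK0 : 0 ≤ K := by positivity
  refine ⟨K, ?_⟩
  -- the key one-step estimate
  have hstep : ∀ t : ℝ, T₀ ≤ t →
      hsNorm (G.comp (R t)) ≤ (1/16) * hsNorm (G.comp (R (t/64)))
        + 128 * K₀ * Real.sqrt (φ t) := by
    intro t hTt
    have ht : 0 < t := lt_of_lt_of_le hT₀pos hTt
    have hτpos : 0 < t/64 := by positivity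
    obtain ⟨hR1t, hR2t⟩ := hR t ht
    obtain ⟨hR1τ, hR2τ⟩ := hR (t/64) hτpos
    set s : ℝ := (t/255)⁻¹ with hsdef
    have hs0 : 0 ≤ s := by positivity
    have hsa := hEsa s hs0
    have hproj := hEproj s hs0
    have hPV := hEV s hs0
    have hRtn : ‖R t‖ ≤ 1 := R_norm_le_one hV ht.le hR1t
    have hRτn : ‖R (t/64)‖ ≤ 1 := R_norm_le_one hV hτpos.le hR1τ
    have hYn : ‖((1 : H →L[ℂ] H) - E s).comp (R t)‖ ≤ 1/256 := by
      have h := compl_res_norm ht hs0 hsa hproj hPV (fun x hx => hcompl s hs0 x hx) hR1t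
      have hts : t * s = 255 := by
        rw [hsdef]
        field_simp
      rw [hts] at h
      norm_num at h ⊢
      exact h
    have hcommτ : (E s).comp (R (t/64)) = (R (t/64)).comp (E s) :=
      comm_res hPV hR1τ hR2τ
    -- decomposition
    have e1 : (t : ℂ) • (V * R t) = 1 - R t := by
      have h := hR1t
      rw [← ContinuousLinearMap.mul_def, add_mul, one_mul, smul_mul_assoc] at h
      exact eq_sub_of_add_eq' h
    set c : ℂ := (64:ℂ)⁻¹ with hcdef
    have hτc : ((t/64 : ℝ) : ℂ) = c * (t:ℂ) := by
      rw [hcdef]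
      push_cast
      ring
    set P := E s with hPdef
    set W := (R (t/64)) * (R t) with hWdef
    set Y := ((1 : H →L[ℂ] H) - P) * (R t) with hYdef
    have hdec : R t = c • (R (t/64)) + (W - c • W) := by
      have h2 : (R (t/64)) * (1 + ((t/64:ℝ):ℂ)•V) = 1 := hR2τ
      calc R t = ((R (t/64)) * (1 + ((t/64:ℝ):ℂ)•V)) * R t := by rw [h2, one_mul]
        _ = (R (t/64)) * (R t + ((t/64:ℝ):ℂ)•(V * R t)) := by
            rw [mul_assoc, add_mul, one_mul, smul_mul_assoc]
        _ = (R (t/64)) * (R t + c • (1 - R t)) := by rw [hτc, mul_smul, e1]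
        _ = _ := by
            rw [mul_add, mul_smul_comm, mul_sub, mul_one, smul_sub, hWdef]
            abel
    have hsplit : W = P * W + (R (t/64)) * Y := by
      have hc : P * R (t/64) = R (t/64) * P := hcommτ
      rw [hWdef, hYdef, sub_mul, one_mul, mul_sub, ← mul_assoc, ← mul_assoc, hc]
      abel
    have hop : R t = c • (R (t/64)) +
        ((P * W - c • (P * W)) + ((R (t/64)) * Y - c • ((R (t/64)) * Y))) := by
      rw [hdec]
      congr 1
      conv_lhs => rw [hsplit]
      rw [smul_add]
      abel
    have hGsum : G.comp (R t) = G.comp (c • (R (t/64))) +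
        (G.comp (P * W - c • (P * W)) + G.comp ((R (t/64)) * Y - c • ((R (t/64)) * Y))) := by
      conv_lhs => rw [hop]
      rw [ContinuousLinearMap.comp_add, ContinuousLinearMap.comp_add]
    -- norm facts
    have hcn : ‖c‖ = 1/64 := by
      rw [hcdef, norm_inv]
      norm_num
    have hone : ‖(1 : H →L[ℂ] H)‖ ≤ 1 := by
      rw [ContinuousLinearMap.one_def]
      exact ContinuousLinearMap.norm_id_le
    -- bound 1
    have hB1 : hsNorm (G.comp (c • (R (t/64)))) ≤ (1/64) * hsNorm (G.comp (R (t/64))) := by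
      have e : G.comp (c • (R (t/64))) = (G.comp (R (t/64))).comp (c • (1 : H →L[ℂ] H)) := by
        ext x
        simp [ContinuousLinearMap.comp_apply, ContinuousLinearMap.smul_apply,
          ContinuousLinearMap.one_apply, map_smul]
      rw [e]
      have h1 : ‖c • (1 : H →L[ℂ] H)‖ ≤ 1/64 := by
        rw [norm_smul, hcn]
        nlinarith [norm_nonneg (1 : H →L[ℂ] H)]
      calc hsNorm ((G.comp (R (t/64))).comp (c • (1 : H →L[ℂ] H)))
          ≤ hsNorm (G.comp (R (t/64))) * ‖c • (1 : H →L[ℂ] H)‖ :=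
            hsNorm_comp_le (summable_approx_comp hG _) _
        _ ≤ hsNorm (G.comp (R (t/64))) * (1/64) :=
            mul_le_mul_of_nonneg_left h1 (hsNorm_nonneg _)
        _ = (1/64) * hsNorm (G.comp (R (t/64))) := mul_comm _ _
    -- bound 2
    have hWn : ‖W‖ ≤ 1 := by
      rw [hWdef, ContinuousLinearMap.mul_def]
      calc ‖(R (t/64)).comp (R t)‖ ≤ ‖R (t/64)‖ * ‖R t‖ :=
            ContinuousLinearMap.opNorm_comp_le _ _
        _ ≤ 1 := by nlinarith [norm_nonneg (R (t/64)), norm_nonneg (R t)]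
    have hspecP : hsNorm (G.comp P) ≤ K₀ * Real.sqrt (φ (t/255)) := by
      rw [hPdef, hsdef]
      exact hK₀ (t/255) (by positivity)
    have hB2 : hsNorm (G.comp (P * W - c • (P * W))) ≤ 2 * (K₀ * Real.sqrt (φ (t/255))) := by
      have e : G.comp (P * W - c • (P * W)) = (G.comp P).comp (W - c • W) := by
        rw [show P * W - c • (P * W) = P * (W - c • W) by rw [mul_sub, mul_smul_comm],
          ContinuousLinearMap.mul_def, ContinuousLinearMap.comp_assoc]
      rw [e]
      have h1 : ‖W - c • W‖ ≤ 2 := by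
        calc ‖W - c • W‖ ≤ ‖W‖ + ‖c • W‖ := norm_sub_le _ _
          _ = ‖W‖ + ‖c‖ * ‖W‖ := by rw [norm_smul]
          _ ≤ 2 := by rw [hcn]; nlinarith [norm_nonneg W]
      calc hsNorm ((G.comp P).comp (W - c • W))
          ≤ hsNorm (G.comp P) * ‖W - c • W‖ := hsNorm_comp_le (summable_approx_comp hG _) _
        _ ≤ (K₀ * Real.sqrt (φ (t/255))) * 2 := by
            apply mul_le_mul hspecP h1 (norm_nonneg _)
            positivity
        _ = 2 * (K₀ * Real.sqrt (φ (t/255))) := mul_comm _ _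
    -- bound 3
    have hB3 : hsNorm (G.comp ((R (t/64)) * Y - c • ((R (t/64)) * Y)))
        ≤ (1/128) * hsNorm (G.comp (R (t/64))) := by
      have e : G.comp ((R (t/64)) * Y - c • ((R (t/64)) * Y))
          = (G.comp (R (t/64))).comp (Y - c • Y) := by
        rw [show (R (t/64)) * Y - c • ((R (t/64)) * Y) = (R (t/64)) * (Y - c • Y) by
          rw [mul_sub, mul_smul_comm], ContinuousLinearMap.mul_def,
          ContinuousLinearMap.comp_assoc]
      rw [e]
      have hYn' : ‖Y‖ ≤ 1/256 := by
        rw [hYdef, hPdef]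
        exact hYn
      have h1 : ‖Y - c • Y‖ ≤ 1/128 := by
        calc ‖Y - c • Y‖ ≤ ‖Y‖ + ‖c • Y‖ := norm_sub_le _ _
          _ = ‖Y‖ + ‖c‖ * ‖Y‖ := by rw [norm_smul]
          _ ≤ 1/128 := by rw [hcn]; nlinarith [norm_nonneg Y]
      calc hsNorm ((G.comp (R (t/64))).comp (Y - c • Y))
          ≤ hsNorm (G.comp (R (t/64))) * ‖Y - c • Y‖ :=
            hsNorm_comp_le (summable_approx_comp hG _) _
        _ ≤ hsNorm (G.comp (R (t/64))) * (1/128) :=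
            mul_le_mul_of_nonneg_left h1 (hsNorm_nonneg _)
        _ = (1/128) * hsNorm (G.comp (R (t/64))) := mul_comm _ _
    -- triangle
    have htri : hsNorm (G.comp (R t)) ≤ 2 * (hsNorm (G.comp (c • (R (t/64)))) +
        2 * (hsNorm (G.comp (P * W - c • (P * W))) +
          hsNorm (G.comp ((R (t/64)) * Y - c • ((R (t/64)) * Y))))) := by
      rw [hGsum]
      have hsum23 : Summable (fun k => approxNum (G.comp (P * W - c • (P * W)) +
          G.comp ((R (t/64)) * Y - c • ((R (t/64)) * Y))) k ^ 2) := by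
        rw [← ContinuousLinearMap.comp_add]
        exact summable_approx_comp hG _
      have h1 := hsNorm_add_le (A := G.comp (c • (R (t/64))))
        (B := G.comp (P * W - c • (P * W)) + G.comp ((R (t/64)) * Y - c • ((R (t/64)) * Y)))
        (summable_approx_comp hG _) hsum23
      have h2 := hsNorm_add_le (A := G.comp (P * W - c • (P * W)))
        (B := G.comp ((R (t/64)) * Y - c • ((R (t/64)) * Y)))
        (summable_approx_comp hG _) (summable_approx_comp hG _)
      calc hsNorm (G.comp (c • (R (t/64))) + (G.comp (P * W - c • (P * W)) +
            G.comp ((R (t/64)) * Y - c • ((R (t/64)) * Y))))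
          ≤ 2 * (hsNorm (G.comp (c • (R (t/64)))) +
            hsNorm (G.comp (P * W - c • (P * W)) +
              G.comp ((R (t/64)) * Y - c • ((R (t/64)) * Y)))) := h1
        _ ≤ _ := by
            have h3 := hsNorm_nonneg (G.comp (c • (R (t/64))))
            linarith
    -- sqrt ratio at 255
    have hsq255 : Real.sqrt (φ (t/255)) ≤ 16 * Real.sqrt (φ t) := by
      have hrt := (hT₁ t (le_trans (le_max_right _ _) hTt)).2
      have hφt : 0 < φ t := hφpos t ht.le
      have h1 : φ (t/255) ≤ 256 * φ t := by
        rw [div_le_iff₀ hφt] at hrt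
        linarith
      calc Real.sqrt (φ (t/255)) ≤ Real.sqrt (256 * φ t) := Real.sqrt_le_sqrt h1
        _ = 16 * Real.sqrt (φ t) := by
            rw [show (256:ℝ) = 16^2 by norm_num, Real.sqrt_mul (by positivity),
              Real.sqrt_sq (by norm_num)]
    have hf0 : 0 ≤ hsNorm (G.comp (R (t/64))) := hsNorm_nonneg _
    have hs0' : 0 ≤ Real.sqrt (φ t) := Real.sqrt_nonneg _
    nlinarith [htri, hB1, hB2, hB3, hsq255, mul_le_mul_of_nonneg_left hsq255 hK₀0]
  -- base bound
  have hbase : ∀ t : ℝ, 0 < t → t ≤ T₀ → hsNorm (G.comp (R t)) ≤ K * Real.sqrt (φ t) := by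
    intro t ht hle
    obtain ⟨hR1t, _⟩ := hR t ht
    have hRtn : ‖R t‖ ≤ 1 := R_norm_le_one hV ht.le hR1t
    have h1 : hsNorm (G.comp (R t)) ≤ hsNorm G := by
      calc hsNorm (G.comp (R t)) ≤ hsNorm G * ‖R t‖ := hsNorm_comp_le hG _
        _ ≤ hsNorm G * 1 := mul_le_mul_of_nonneg_left hRtn (hsNorm_nonneg _)
        _ = hsNorm G := mul_one _
    have h2 : Real.sqrt (φ T₀) ≤ Real.sqrt (φ t) :=
      Real.sqrt_le_sqrt (hφdec t T₀ ht.le hle)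
    have h3 : hsNorm G = B * Real.sqrt (φ T₀) := by
      rw [hBdef, div_mul_cancel₀ _ (ne_of_gt hφT₀)]
    calc hsNorm (G.comp (R t)) ≤ hsNorm G := h1
      _ = B * Real.sqrt (φ T₀) := h3
      _ ≤ B * Real.sqrt (φ t) := mul_le_mul_of_nonneg_left h2 hB0
      _ ≤ K * Real.sqrt (φ t) := by
          apply mul_le_mul_of_nonneg_right _ (Real.sqrt_nonneg _)
          rw [hKdef]
          nlinarith
  -- induction
  have hsq65 : Real.sqrt 65 ≤ 33/4 := by
    calc Real.sqrt 65 ≤ Real.sqrt ((33/4)^2) := Real.sqrt_le_sqrt (by norm_num)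
      _ = 33/4 := Real.sqrt_sq (by norm_num)
  have main : ∀ n : ℕ, ∀ t : ℝ, 0 < t → t ≤ T₀ * 64 ^ n →
      hsNorm (G.comp (R t)) ≤ K * Real.sqrt (φ t) := by
    intro n
    induction n with
    | zero =>
        intro t ht hle
        rw [pow_zero, mul_one] at hle
        exact hbase t ht hle
    | succ n ih =>
        intro t ht hle
        by_cases hcase : t ≤ T₀ * 64 ^ n
        · exact ih t ht hcase
        push_neg at hcase
        have h1n : (1:ℝ) ≤ 64 ^ n := one_le_pow₀ (by norm_num)
        have hT₀t : T₀ ≤ t := by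
          calc T₀ ≤ T₀ * 64 ^ n := le_mul_of_one_le_right hT₀pos.le h1n
            _ ≤ t := hcase.le
        have hτle : t/64 ≤ T₀ * 64 ^ n := by
          rw [div_le_iff₀ (by norm_num : (0:ℝ) < 64)]
          calc t ≤ T₀ * 64 ^ (n+1) := hle
            _ = T₀ * 64 ^ n * 64 := by rw [pow_succ]; ring
        have hfτ := ih (t/64) (by positivity) hτle
        have hst := hstep t hT₀t
        -- sqrt ratio at 64
        have hsq64 : Real.sqrt (φ (t/64)) ≤ Real.sqrt 65 * Real.sqrt (φ t) := by
          have hrt := (hT₁ t (le_trans (le_max_right _ _) hT₀t)).1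
          have hφt : 0 < φ t := hφpos t (lt_of_lt_of_le hT₀pos hT₀t).le
          have h1 : φ (t/64) ≤ 65 * φ t := by
            rw [div_le_iff₀ hφt] at hrt
            linarith
          calc Real.sqrt (φ (t/64)) ≤ Real.sqrt (65 * φ t) := Real.sqrt_le_sqrt h1
            _ = Real.sqrt 65 * Real.sqrt (φ t) := Real.sqrt_mul (by norm_num) _
        have hs0' : 0 ≤ Real.sqrt (φ t) := Real.sqrt_nonneg _
        have hchain : hsNorm (G.comp (R (t/64))) ≤ (33/4) * (K * Real.sqrt (φ t)) := by
          calc hsNorm (G.comp (R (t/64))) ≤ K * Real.sqrt (φ (t/64)) := hfτ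
            _ ≤ K * (Real.sqrt 65 * Real.sqrt (φ t)) :=
                mul_le_mul_of_nonneg_left hsq64 hK0
            _ ≤ (33/4) * (K * Real.sqrt (φ t)) := by
                nlinarith [mul_le_mul_of_nonneg_right hsq65 hs0']
        rw [hKdef] at *
        nlinarith [hst, hchain, mul_nonneg hK₀0 hs0', mul_nonneg hB0 hs0']
  -- conclusion
  intro t ht
  obtain ⟨n, hn⟩ := pow_unbounded_of_one_lt (y := (64:ℝ)) t (by norm_num)
  have : t ≤ T₀ * 64 ^ n := by
    calc t ≤ 64 ^ n := hn.le
      _ ≤ T₀ * 64 ^ n := le_mul_of_one_le_left (by positivity) hT₀1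
  exact main n t ht this
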